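/- arXiv:1307.1105 — 2 statements merged into one kernel-verified Lean document; each statement's English description precedes it below -/
import Mathlib

section
/- Let u, B, ρ, S, T, h be smooth fields on ℝ × ℝ³ with ρ > 0 everywhere, let μ₀ > 0 be a constant, and set ω = ∇×u. Assume Faraday's equation ∂B/∂t − ∇×(u×B) = 0, Gauss's law ∇·B = 0, and the MHD momentum equation in the form ∂u/∂t − u×ω + ∇(h + |u|²/2) − ((∇×B)×B)/(μ₀ρ) = T∇S. Then the cross helicity density u·B satisfies ∂(u·B)/∂t + ∇·[ (u·B) u + (h − |u|²/2) B ] = T B·∇S. -/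
noncomputable section

/-- Vectors in ℝ³. -/
abbrev Vec3 : Type := Fin 3 → ℝ

/-- Points of space-time: `(t, x)` with `t : ℝ`, `x : Fin 3 → ℝ`. -/
abbrev Pt : Type := ℝ × Vec3

/-- Euclidean dot product on ℝ³. -/
def dot3 (a b : Vec3) : ℝ := ∑ i, a i * b i

/-- Cross product on ℝ³. -/
def cross3 (a b : Vec3) : Vec3 :=
  ![a 1 * b 2 - a 2 * b 1, a 2 * b 0 - a 0 * b 2, a 0 * b 1 - a 1 * b 0]

/-- Spatial partial derivative ∂f/∂xᵢ of a scalar field. -/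
def pd (i : Fin 3) (f : Pt → ℝ) (p : Pt) : ℝ :=
  fderiv ℝ (fun x => f (p.1, x)) p.2 (Pi.single i 1)

/-- Time derivative ∂f/∂t of a scalar field. -/
def dt (f : Pt → ℝ) (p : Pt) : ℝ := deriv (fun s => f (s, p.2)) p.1

/-- Time derivative of a vector field, componentwise. -/
def dtVec (F : Pt → Vec3) (p : Pt) : Vec3 := fun i => dt (fun q => F q i) p

/-- Spatial gradient ∇f of a scalar field. -/
def grad3 (f : Pt → ℝ) (p : Pt) : Vec3 := fun i => pd i f p

/-- Spatial divergence ∇·F of a vector field. -/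
def div3 (F : Pt → Vec3) (p : Pt) : ℝ := ∑ i, pd i (fun q => F q i) p

/-- Spatial curl ∇×F of a vector field. -/
def curl3 (F : Pt → Vec3) (p : Pt) : Vec3 :=
  ![pd 1 (fun q => F q 2) p - pd 2 (fun q => F q 1) p,
    pd 2 (fun q => F q 0) p - pd 0 (fun q => F q 2) p,
    pd 0 (fun q => F q 1) p - pd 1 (fun q => F q 0) p]

/-- Directional derivative (u·∇)f of a scalar field. -/
def dirD (u : Pt → Vec3) (f : Pt → ℝ) (p : Pt) : ℝ := ∑ i, u p i * pd i f p

/-- Directional derivative (u·∇)F of a vector field. -/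
def dirDVec (u F : Pt → Vec3) (p : Pt) : Vec3 :=
  fun j => ∑ i, u p i * pd i (fun q => F q j) p

/-- (∇u)ᵀ·A, the vector with i-th component ∑ⱼ (∂uʲ/∂xⁱ) Aⱼ. -/
def gradTdot (u A : Pt → Vec3) (p : Pt) : Vec3 :=
  fun i => ∑ j, pd i (fun q => u q j) p * A p j

/-- A field is smooth when it is C^∞ jointly in time and space. -/
def SmoothS (f : Pt → ℝ) : Prop := ContDiff ℝ (⊤ : ℕ∞) f

/-- A vector field is smooth when it is C^∞ jointly in time and space. -/
def SmoothV (F : Pt → Vec3) : Prop := ContDiff ℝ (⊤ : ℕ∞) F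


section Helpers

lemma SmoothS.diffX {f : Pt → ℝ} (hf : SmoothS f) (t : ℝ) (x : Vec3) :
    DifferentiableAt ℝ (fun y => f (t, y)) x :=
  (hf.differentiable (by simp) (t, x)).comp x
    ((differentiableAt_const t).prodMk differentiableAt_id)

lemma SmoothS.diffT {f : Pt → ℝ} (hf : SmoothS f) (t : ℝ) (x : Vec3) :
    DifferentiableAt ℝ (fun s => f (s, x)) t :=
  (hf.differentiable (by simp) (t, x)).comp t
    (differentiableAt_id.prodMk (differentiableAt_const x))

lemma pd_add {f g : Pt → ℝ} (hf : SmoothS f) (hg : SmoothS g) (i : Fin 3) (p : Pt) :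
    pd i (fun q => f q + g q) p = pd i f p + pd i g p := by
  simp only [pd]
  rw [fderiv_fun_add (hf.diffX p.1 p.2) (hg.diffX p.1 p.2)]
  simp

lemma pd_sub {f g : Pt → ℝ} (hf : SmoothS f) (hg : SmoothS g) (i : Fin 3) (p : Pt) :
    pd i (fun q => f q - g q) p = pd i f p - pd i g p := by
  simp only [pd]
  rw [fderiv_fun_sub (hf.diffX p.1 p.2) (hg.diffX p.1 p.2)]
  simp

lemma pd_mul {f g : Pt → ℝ} (hf : SmoothS f) (hg : SmoothS g) (i : Fin 3) (p : Pt) :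
    pd i (fun q => f q * g q) p = pd i f p * g p + f p * pd i g p := by
  simp only [pd]
  rw [fderiv_fun_mul (hf.diffX p.1 p.2) (hg.diffX p.1 p.2)]
  simp; ring

lemma pd_div2 {f : Pt → ℝ} (hf : SmoothS f) (i : Fin 3) (p : Pt) :
    pd i (fun q => f q / 2) p = pd i f p / 2 := by
  simp only [pd, div_eq_mul_inv]
  rw [fderiv_mul_const (hf.diffX p.1 p.2)]
  simp; ring

lemma dt_add {f g : Pt → ℝ} (hf : SmoothS f) (hg : SmoothS g) (p : Pt) :
    dt (fun q => f q + g q) p = dt f p + dt g p := by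
  simp only [dt]
  exact deriv_add (hf.diffT p.1 p.2) (hg.diffT p.1 p.2)

lemma dt_mul {f g : Pt → ℝ} (hf : SmoothS f) (hg : SmoothS g) (p : Pt) :
    dt (fun q => f q * g q) p = dt f p * g p + f p * dt g p := by
  simp only [dt]
  exact deriv_mul (hf.diffT p.1 p.2) (hg.diffT p.1 p.2)

end Helpers

/-- the MHD cross helicity density u·B satisfies the balance
    law with source T B·∇S. -/
theorem cross_helicity_balance
    (u B : Pt → Vec3) (ρ S T h : Pt → ℝ) (μ₀ : ℝ)
    (hu : SmoothV u) (hB : SmoothV B) (hρ : SmoothS ρ)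
    (hS : SmoothS S) (hT : SmoothS T) (hh : SmoothS h)
    (hρpos : ∀ p : Pt, 0 < ρ p) (hμ₀ : 0 < μ₀)
    (hfar : ∀ p : Pt,
      dtVec B p - curl3 (fun q => cross3 (u q) (B q)) p = 0)
    (hgauss : ∀ p : Pt, div3 B p = 0)
    (hmom : ∀ p : Pt,
      dtVec u p - cross3 (u p) (curl3 u p)
        + grad3 (fun q => h q + dot3 (u q) (u q) / 2) p
        - (μ₀ * ρ p)⁻¹ • cross3 (curl3 B p) (B p)
        = T p • grad3 S p) :
    ∀ p : Pt,
      dt (fun q => dot3 (u q) (B q)) p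
        + div3 (fun q =>
            dot3 (u q) (B q) • u q
              + (h q - dot3 (u q) (u q) / 2) • B q) p
        = T p * dot3 (B p) (grad3 S p) := by
  intro p
  have hu' : ContDiff ℝ (⊤:ℕ∞) u := hu
  have hB' : ContDiff ℝ (⊤:ℕ∞) B := hB
  have hh' : ContDiff ℝ (⊤:ℕ∞) h := hh
  have hS' : ContDiff ℝ (⊤:ℕ∞) S := hS
  have hm0 := congrFun (hmom p) 0
  have hm1 := congrFun (hmom p) 1
  have hm2 := congrFun (hmom p) 2
  have hf0 := congrFun (hfar p) 0
  have hf1 := congrFun (hfar p) 1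
  have hf2 := congrFun (hfar p) 2
  have hg := hgauss p
  simp only [dtVec, curl3, cross3, grad3, div3, dot3, Fin.sum_univ_three,
    Matrix.cons_val_zero, Matrix.cons_val_one, Matrix.head_cons,
    Matrix.cons_val_two, Matrix.tail_cons, Pi.add_apply, Pi.sub_apply,
    Pi.smul_apply, Pi.zero_apply, smul_eq_mul] at hm0 hm1 hm2 hf0 hf1 hf2 hg ⊢
  simp (disch := first | assumption | (unfold SmoothS; fun_prop (disch := norm_num)))
    only [pd_add, pd_sub, pd_mul, pd_div2, dt_add, dt_mul]
    at hm0 hm1 hm2 hf0 hf1 hf2 hg ⊢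
  linear_combination B p 0 * hm0 + B p 1 * hm1 + B p 2 * hm2
    + u p 0 * hf0 + u p 1 * hf1 + u p 2 * hf2
    + (h p + (u p 0 * u p 0 + u p 1 * u p 1 + u p 2 * u p 2) / 2) * hg
end
end

section
/- (Local Godbillon–Vey conservation law) Let Ã, η, u be smooth ℝ³-valued fields and α a smooth scalar field on ℝ × ℝ³. Assume the Frobenius integrability relation ∇×Ã = η × Ã and the evolution equation ∂η/∂t − u×(∇×η) + ∇(u·η) = α Ã. Then the Godbillon–Vey density ψ = η·(∇×η) satisfies the local conservation law ∂ψ/∂t + ∇·( u ψ + α ∇×Ã ) = 0. -/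
noncomputable section

/-! ### Auxiliary machinery -/

/-- Directional derivative of a scalar field on space-time, in direction `v`. -/
def D (v : Pt) (f : Pt → ℝ) (p : Pt) : ℝ := fderiv ℝ f p v

/-- Spatial coordinate directions. -/
def ee (i : Fin 3) : Pt := (0, Pi.single i 1)

/-- The time direction. -/
def vt : Pt := (1, 0)

theorem one_le_itop : (1 : WithTop ℕ∞) ≤ ((⊤:ℕ∞) : WithTop ℕ∞) := by
  rw [show ((1:WithTop ℕ∞)) = ((1:ℕ∞) : WithTop ℕ∞) by norm_cast]; exact_mod_cast le_top
theorem two_le_itop : (2 : WithTop ℕ∞) ≤ ((⊤:ℕ∞) : WithTop ℕ∞) := by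
  rw [show ((2:WithTop ℕ∞)) = ((2:ℕ∞) : WithTop ℕ∞) by norm_cast]; exact_mod_cast le_top
theorem itop_add_one : ((⊤:ℕ∞) : WithTop ℕ∞) + 1 ≤ ((⊤:ℕ∞) : WithTop ℕ∞) := by
  exact_mod_cast le_top

theorem SmV.diff {f : Pt → ℝ} (hf : ContDiff ℝ (⊤ : ℕ∞) f) : Differentiable ℝ f :=
  hf.differentiable (by simp)

theorem pd_eq {f : Pt → ℝ} (hf : ContDiff ℝ (⊤ : ℕ∞) f) (i : Fin 3) (p : Pt) :
    pd i f p = D (ee i) f p := by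
  have h1 : HasFDerivAt (fun x : Vec3 => (p.1, x)) (ContinuousLinearMap.inr ℝ ℝ Vec3) p.2 :=
    HasFDerivAt.prodMk (hasFDerivAt_const p.1 p.2) (hasFDerivAt_id p.2)
  have h2 : HasFDerivAt (fun x : Vec3 => f (p.1, x))
      ((fderiv ℝ f p).comp (ContinuousLinearMap.inr ℝ ℝ Vec3)) p.2 :=
    ((SmV.diff hf p).hasFDerivAt).comp p.2 h1
  simp only [pd, D, ee]
  rw [h2.fderiv]
  rfl

theorem dt_eq {f : Pt → ℝ} (hf : ContDiff ℝ (⊤ : ℕ∞) f) (p : Pt) :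
    dt f p = D vt f p := by
  have h1 : HasFDerivAt (fun s : ℝ => (s, p.2)) (ContinuousLinearMap.inl ℝ ℝ Vec3) p.1 :=
    HasFDerivAt.prodMk (hasFDerivAt_id p.1) (hasFDerivAt_const p.2 p.1)
  have h2 : HasFDerivAt (fun s : ℝ => f (s, p.2))
      ((fderiv ℝ f p).comp (ContinuousLinearMap.inl ℝ ℝ Vec3)) p.1 :=
    ((SmV.diff hf p).hasFDerivAt).comp p.1 h1
  simp only [dt, D, vt]
  rw [h2.hasDerivAt.deriv]
  rfl

@[fun_prop]
theorem D_contDiff (v : Pt) {f : Pt → ℝ} (hf : ContDiff ℝ (⊤ : ℕ∞) f) :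
    ContDiff ℝ (⊤ : ℕ∞) (D v f) := by
  have h := hf.fderiv_right (m := (⊤:ℕ∞)) itop_add_one
  exact (ContinuousLinearMap.apply ℝ ℝ v).contDiff.comp h

theorem D_comm {f : Pt → ℝ} (hf : ContDiff ℝ (⊤ : ℕ∞) f) (v w : Pt) (p : Pt) :
    D v (D w f) p = D w (D v f) p := by
  have hs : IsSymmSndFDerivAt ℝ f p :=
    ContDiffAt.isSymmSndFDerivAt hf.contDiffAt (by rw [minSmoothness_of_isRCLikeNormedField]; exact two_le_itop)
  have h2 : ContDiff ℝ (⊤ : ℕ∞) (fderiv ℝ f) := hf.fderiv_right (m := (⊤:ℕ∞)) itop_add_one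
  have key : ∀ x : Pt, ∀ q : Pt, fderiv ℝ (D x f) q = (fderiv ℝ (fderiv ℝ f) q).flip x := by
    intro x q
    have := fderiv_clm_apply (c := fderiv ℝ f) (u := fun _ : Pt => x)
      (h2.differentiable (by simp) q) (differentiableAt_const x)
    rw [show D x f = fun y => fderiv ℝ f y x from rfl]; simpa using this
  show fderiv ℝ (D w f) p v = fderiv ℝ (D v f) p w
  rw [key w p, key v p]
  exact hs v w

theorem D_addR {f g : Pt → ℝ} (hf : ContDiff ℝ (⊤ : ℕ∞) f) (hg : ContDiff ℝ (⊤ : ℕ∞) g)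
    (v : Pt) (p : Pt) : D v (fun q => f q + g q) p = D v f p + D v g p := by
  simp only [D, fderiv_fun_add (SmV.diff hf p) (SmV.diff hg p)]; rfl

theorem D_subR {f g : Pt → ℝ} (hf : ContDiff ℝ (⊤ : ℕ∞) f) (hg : ContDiff ℝ (⊤ : ℕ∞) g)
    (v : Pt) (p : Pt) : D v (fun q => f q - g q) p = D v f p - D v g p := by
  simp only [D, fderiv_fun_sub (SmV.diff hf p) (SmV.diff hg p)]; rfl

theorem D_mulR {f g : Pt → ℝ} (hf : ContDiff ℝ (⊤ : ℕ∞) f) (hg : ContDiff ℝ (⊤ : ℕ∞) g)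
    (v : Pt) (p : Pt) : D v (fun q => f q * g q) p = D v f p * g p + f p * D v g p := by
  simp only [D, fderiv_fun_mul (SmV.diff hf p) (SmV.diff hg p)]
  simp only [ContinuousLinearMap.add_apply, ContinuousLinearMap.smul_apply, smul_eq_mul]; ring

theorem D_negR {f : Pt → ℝ} (_hf : ContDiff ℝ (⊤ : ℕ∞) f)
    (v : Pt) (p : Pt) : D v (fun q => -f q) p = -D v f p := by
  simp only [D, fderiv_fun_neg]; rfl

theorem D_constR (c : ℝ) (v : Pt) (p : Pt) : D v (fun _ => c) p = 0 := by
  simp [D]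

set_option maxHeartbeats 4000000 in
/-- local Godbillon–Vey conservation law: if ∇×Ã = η×Ã and
    ∂η/∂t − u×(∇×η) + ∇(u·η) = αÃ, then ψ = η·(∇×η) satisfies
    ∂ψ/∂t + ∇·(uψ + α∇×Ã) = 0. -/
theorem godbillon_vey_local_conservation
    (Atil η u : Pt → Vec3) (α : Pt → ℝ)
    (hAtil : SmoothV Atil) (hη : SmoothV η) (hu : SmoothV u) (hα : SmoothS α)
    (hfrob : ∀ p : Pt, curl3 Atil p = cross3 (η p) (Atil p))
    (hevol : ∀ p : Pt,
      dtVec η p - cross3 (u p) (curl3 η p)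
        + grad3 (fun q => dot3 (u q) (η q)) p = α p • Atil p) :
    ∀ p : Pt,
      dt (fun q => dot3 (η q) (curl3 η q)) p
        + div3 (fun q =>
            dot3 (η q) (curl3 η q) • u q + α q • curl3 Atil q) p = 0 := by
  intro p
  have hA' : ContDiff ℝ (⊤ : ℕ∞) Atil := hAtil
  have hη' : ContDiff ℝ (⊤ : ℕ∞) η := hη
  have hu' : ContDiff ℝ (⊤ : ℕ∞) u := hu
  have hα' : ContDiff ℝ (⊤ : ℕ∞) α := hα
  -- pointwise evolution equations, per component, in D-form
  have hev0 := fun q : Pt => congrFun (hevol q) 0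
  have hev1 := fun q : Pt => congrFun (hevol q) 1
  have hev2 := fun q : Pt => congrFun (hevol q) 2
  simp only [dtVec, cross3, curl3, grad3, dot3, Fin.sum_univ_three,
    Matrix.cons_val_zero, Matrix.cons_val_one, Matrix.head_cons,
    Matrix.cons_val_two, Matrix.tail_cons, Pi.sub_apply, Pi.add_apply,
    Pi.smul_apply, smul_eq_mul] at hev0 hev1 hev2
  simp (disch := fun_prop) only [pd_eq, dt_eq] at hev0 hev1 hev2
  simp (disch := fun_prop) only [D_addR, D_subR, D_mulR, D_negR, D_constR] at hev0 hev1 hev2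
  -- frobenius equations, per component, in D-form
  have hfr0 := fun q : Pt => congrFun (hfrob q) 0
  have hfr1 := fun q : Pt => congrFun (hfrob q) 1
  have hfr2 := fun q : Pt => congrFun (hfrob q) 2
  simp only [curl3, cross3, Fin.sum_univ_three,
    Matrix.cons_val_zero, Matrix.cons_val_one, Matrix.head_cons,
    Matrix.cons_val_two, Matrix.tail_cons] at hfr0 hfr1 hfr2
  simp (disch := fun_prop) only [pd_eq] at hfr0 hfr1 hfr2
  -- spatial derivatives of the evolution equations
  have hEd12 := congrArg (fun g : Pt → ℝ => D (ee 1) g p) (funext hev2)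
  have hEd21 := congrArg (fun g : Pt → ℝ => D (ee 2) g p) (funext hev1)
  have hEd20 := congrArg (fun g : Pt → ℝ => D (ee 2) g p) (funext hev0)
  have hEd02 := congrArg (fun g : Pt → ℝ => D (ee 0) g p) (funext hev2)
  have hEd01 := congrArg (fun g : Pt → ℝ => D (ee 0) g p) (funext hev1)
  have hEd10 := congrArg (fun g : Pt → ℝ => D (ee 1) g p) (funext hev0)
  simp (disch := fun_prop) only [D_addR, D_subR, D_mulR, D_negR, D_constR]
    at hEd12 hEd21 hEd20 hEd02 hEd01 hEd10
  -- spatial derivatives of the frobenius equations (diagonal)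
  have hFd0 := congrArg (fun g : Pt → ℝ => D (ee 0) g p) (funext hfr0)
  have hFd1 := congrArg (fun g : Pt → ℝ => D (ee 1) g p) (funext hfr1)
  have hFd2 := congrArg (fun g : Pt → ℝ => D (ee 2) g p) (funext hfr2)
  simp (disch := fun_prop) only [D_addR, D_subR, D_mulR, D_negR, D_constR]
    at hFd0 hFd1 hFd2
  -- pointwise instances
  have hEp0 := hev0 p
  have hEp1 := hev1 p
  have hEp2 := hev2 p
  have hFp0 := hfr0 p
  have hFp1 := hfr1 p
  have hFp2 := hfr2 p
  -- expand the goal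
  simp only [dot3, cross3, curl3, div3, grad3, Fin.sum_univ_three,
    Matrix.cons_val_zero, Matrix.cons_val_one, Matrix.head_cons,
    Matrix.cons_val_two, Matrix.tail_cons, Pi.add_apply, Pi.smul_apply, smul_eq_mul]
  simp (disch := fun_prop) only [pd_eq, dt_eq]
  simp (disch := fun_prop) only [D_addR, D_subR, D_mulR, D_negR, D_constR]
  -- normalize order of second derivatives
  have hswT : ∀ (a : Fin 3) (f : Pt → ℝ), ContDiff ℝ (⊤ : ℕ∞) f →
      ∀ q : Pt, D vt (D (ee a) f) q = D (ee a) (D vt f) q :=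
    fun a f hf q => D_comm hf vt (ee a) q
  have hsw10 : ∀ (f : Pt → ℝ), ContDiff ℝ (⊤ : ℕ∞) f →
      ∀ q : Pt, D (ee 1) (D (ee 0) f) q = D (ee 0) (D (ee 1) f) q :=
    fun f hf q => D_comm hf (ee 1) (ee 0) q
  have hsw20 : ∀ (f : Pt → ℝ), ContDiff ℝ (⊤ : ℕ∞) f →
      ∀ q : Pt, D (ee 2) (D (ee 0) f) q = D (ee 0) (D (ee 2) f) q :=
    fun f hf q => D_comm hf (ee 2) (ee 0) q
  have hsw21 : ∀ (f : Pt → ℝ), ContDiff ℝ (⊤ : ℕ∞) f →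
      ∀ q : Pt, D (ee 2) (D (ee 1) f) q = D (ee 1) (D (ee 2) f) q :=
    fun f hf q => D_comm hf (ee 2) (ee 1) q
  simp (disch := fun_prop) only [hswT, hsw10, hsw20, hsw21]
    at hEd12 hEd21 hEd20 hEd02 hEd01 hEd10 hFd0 hFd1 hFd2 ⊢
  linear_combination
    (D (ee 1) (fun q => η q 2) p - D (ee 2) (fun q => η q 1) p) * hEp0 +
    (D (ee 2) (fun q => η q 0) p - D (ee 0) (fun q => η q 2) p) * hEp1 +
    (D (ee 0) (fun q => η q 1) p - D (ee 1) (fun q => η q 0) p) * hEp2 +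
    η p 0 * (hEd12 - hEd21) + η p 1 * (hEd20 - hEd02) + η p 2 * (hEd01 - hEd10) -
    α p * (hFd0 + hFd1 + hFd2) +
    2 * α p * (η p 0 * hFp0 + η p 1 * hFp1 + η p 2 * hFp2) +
    D (ee 0) α p * hFp0 + D (ee 1) α p * hFp1 + D (ee 2) α p * hFp2
end
end
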